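/- For 1 ≤ i ≤ C, if f, g ∈ ℂ[X,Y] satisfy r·f = ζ^{−i} f, r·g = ζ^{i} g, and s·f = −g, then the pair (f, g) lies in the ℂ[X,Y]-submodule of ℂ[X,Y]² generated by (Y^i, −X^i) and (X^{n−i}, −Y^{n−i}). -/

import Mathlib

open MvPolynomial

noncomputable section

/-- The action of the generator `r` of the dihedral group `D_n` on `ℂ[X,Y]`:
the `ℂ`-algebra automorphism determined by `X ↦ ζ·X`, `Y ↦ ζ⁻¹·Y`. -/
def rAct (ζ : ℂ) : MvPolynomial (Fin 2) ℂ →ₐ[ℂ] MvPolynomial (Fin 2) ℂ :=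
  aeval ![ζ • X 0, ζ⁻¹ • X 1]

/-- The action of the generator `s` of the dihedral group `D_n` on `ℂ[X,Y]`:
the `ℂ`-algebra automorphism determined by `X ↦ Y`, `Y ↦ X`. -/
def sAct : MvPolynomial (Fin 2) ℂ →ₐ[ℂ] MvPolynomial (Fin 2) ℂ :=
  aeval ![X 1, X 0]

def sw (d : Fin 2 →₀ ℕ) : Fin 2 →₀ ℕ :=
  Finsupp.single 0 (d 1) + Finsupp.single 1 (d 0)

lemma sw_apply0 (d : Fin 2 →₀ ℕ) : sw d 0 = d 1 := by
  simp [sw, Finsupp.single_apply]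

lemma sw_apply1 (d : Fin 2 →₀ ℕ) : sw d 1 = d 0 := by
  simp [sw, Finsupp.single_apply]

lemma sw_sw (d : Fin 2 →₀ ℕ) : sw (sw d) = d := by
  ext a
  fin_cases a <;> simp [sw_apply0, sw_apply1]

lemma monomial_eq' (d : Fin 2 →₀ ℕ) (c : ℂ) :
    (monomial d c : MvPolynomial (Fin 2) ℂ) = C c * X 0 ^ (d 0) * X 1 ^ (d 1) := by
  have hd : d = Finsupp.single 0 (d 0) + (Finsupp.single 1 (d 1) + 0) := by
    ext a; fin_cases a <;> simp [Finsupp.single_apply]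
  rw [hd, monomial_single_add, monomial_single_add]
  simp [Finsupp.single_apply]
  ring

lemma rAct_X0 (ζ : ℂ) : rAct ζ (X 0) = ζ • X 0 := by simp [rAct]
lemma rAct_X1 (ζ : ℂ) : rAct ζ (X 1) = ζ⁻¹ • X 1 := by simp [rAct]
lemma sAct_X0 : sAct (X 0) = X 1 := by simp [sAct]
lemma sAct_X1 : sAct (X 1) = X 0 := by simp [sAct]

lemma rAct_monomial (ζ : ℂ) (d : Fin 2 →₀ ℕ) (c : ℂ) :
    rAct ζ (monomial d c) = (ζ ^ (d 0) * ζ⁻¹ ^ (d 1)) • monomial d c := by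
  have hC : rAct ζ (C c) = C c := by simp [rAct]
  rw [monomial_eq']
  rw [map_mul, map_mul, map_pow, map_pow, rAct_X0, rAct_X1, hC]
  simp only [smul_pow, smul_eq_C_mul, map_pow, map_mul]
  ring

lemma sAct_monomial (d : Fin 2 →₀ ℕ) (c : ℂ) :
    sAct (monomial d c) = monomial (sw d) c := by
  have hC : sAct (C c) = C c := by simp [sAct]
  rw [monomial_eq', monomial_eq' (sw d), sw_apply0, sw_apply1]
  rw [map_mul, map_mul, map_pow, map_pow, sAct_X0, sAct_X1, hC]
  ring

lemma coeff_rAct (ζ : ℂ) (e : Fin 2 →₀ ℕ) (h : MvPolynomial (Fin 2) ℂ) :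
    coeff e (rAct ζ h) = (ζ ^ (e 0) * ζ⁻¹ ^ (e 1)) * coeff e h := by
  induction h using MvPolynomial.induction_on' with
  | monomial d c =>
    rw [rAct_monomial, coeff_smul, smul_eq_mul, coeff_monomial]
    split_ifs with hh
    · subst hh; ring
    · ring
  | add p q hp hq => rw [map_add, coeff_add, coeff_add, hp, hq]; ring

lemma coeff_sAct (e : Fin 2 →₀ ℕ) (h : MvPolynomial (Fin 2) ℂ) :
    coeff e (sAct h) = coeff (sw e) h := by
  induction h using MvPolynomial.induction_on' with
  | monomial d c =>
    rw [sAct_monomial, coeff_monomial, coeff_monomial]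
    have hiff : sw d = e ↔ d = sw e :=
      ⟨fun h => by rw [← h, sw_sw], fun h => by rw [h, sw_sw]⟩
    simp only [hiff]
  | add p q hp hq => rw [map_add, coeff_add, coeff_add, hp, hq]

lemma sAct_sAct (p : MvPolynomial (Fin 2) ℂ) : sAct (sAct p) = p := by
  have : sAct.comp sAct = AlgHom.id ℂ (MvPolynomial (Fin 2) ℂ) := by
    apply algHom_ext
    intro i
    fin_cases i <;> simp [sAct]
  exact congrArg (fun φ => φ p) this

lemma key (n : ℕ) (hn : 0 < n) (ζ : ℂ) (hζ : IsPrimitiveRoot ζ n) :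
    ∀ N (h : MvPolynomial (Fin 2) ℂ), h.support.card ≤ N → rAct ζ h = h → sAct h = -h →
      ∃ q, h = (X 0 ^ n - X 1 ^ n) * q := by
  intro N
  induction N with
  | zero =>
    intro h hcard _ _
    refine ⟨0, ?_⟩
    rw [mul_zero]
    rw [Nat.le_zero, Finset.card_eq_zero] at hcard
    exact (MvPolynomial.support_eq_empty).1 hcard
  | succ N ih =>
    intro h hcard h1 h2
    by_cases h0 : h = 0
    · exact ⟨0, by rw [h0, mul_zero]⟩
    have hζ0 : ζ ≠ 0 := hζ.ne_zero hn.ne'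
    -- antisymmetry of coefficients
    have hs : ∀ e : Fin 2 →₀ ℕ, coeff (sw e) h = -coeff e h := by
      intro e
      rw [← coeff_sAct, h2, coeff_neg]
    -- no diagonal
    have hdiag : ∀ e : Fin 2 →₀ ℕ, e ∈ h.support → e 0 ≠ e 1 := by
      intro e he heq
      have hswe : sw e = e := by
        ext a; fin_cases a <;> simp [sw_apply0, sw_apply1, heq]
      have := hs e
      rw [hswe] at this
      exact (MvPolynomial.mem_support_iff.1 he) (CharZero.eq_neg_self_iff.1 this)
    -- pick d in support with d 1 < d 0
    obtain ⟨d₀, hd₀⟩ := Finset.nonempty_iff_ne_empty.2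
      (fun hh => h0 ((MvPolynomial.support_eq_empty).1 hh))
    have hne : d₀ 0 ≠ d₀ 1 := hdiag d₀ hd₀
    obtain ⟨d, hd, hdlt⟩ : ∃ d ∈ h.support, d 1 < d 0 := by
      rcases lt_or_gt_of_ne hne with hlt | hgt
      · refine ⟨sw d₀, ?_, ?_⟩
        · rw [MvPolynomial.mem_support_iff, hs d₀, neg_ne_zero]
          exact MvPolynomial.mem_support_iff.1 hd₀
        · rw [sw_apply0, sw_apply1]; exact hlt
      · exact ⟨d₀, hd₀, hgt⟩
    set c := coeff d h with hc
    have hc0 : c ≠ 0 := MvPolynomial.mem_support_iff.1 hd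
    -- eigenvalue condition on d
    have hscal : ζ ^ (d 0) * ζ⁻¹ ^ (d 1) = 1 := by
      have := coeff_rAct ζ d h
      rw [h1, ← hc] at this
      exact mul_right_cancel₀ hc0 (by rw [one_mul]; exact this.symm)
    have hpow : ζ ^ (d 0 - d 1) = 1 := by
      have h01 : ζ ^ (d 0) = ζ ^ (d 1) := by
        have := congrArg (· * ζ ^ (d 1)) hscal
        simp only [mul_assoc, ← mul_pow, inv_mul_cancel₀ hζ0, one_pow, mul_one, one_mul] at this
        exact this
      have : ζ ^ (d 0 - d 1) * ζ ^ (d 1) = ζ ^ (d 1) := by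
        rw [← pow_add, Nat.sub_add_cancel hdlt.le, h01]
      exact mul_right_cancel₀ (pow_ne_zero _ hζ0) (by rw [one_mul]; exact this)
    obtain ⟨k, hk⟩ := hζ.dvd_of_pow_eq_one _ hpow
    have hd0 : d 0 = n * k + d 1 := by omega
    -- the subtracted symmetric piece
    set u : MvPolynomial (Fin 2) ℂ := monomial d c - monomial (sw d) c with hu
    have hswd_ne : sw d ≠ d := by
      intro hh
      have := congrFun (congrArg (fun (p : Fin 2 →₀ ℕ) => (p : Fin 2 → ℕ)) hh) 0
      simp only [sw_apply0] at this
      omega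
    -- divisibility of u
    obtain ⟨w, hw⟩ := sub_dvd_pow_sub_pow (X 0 ^ n : MvPolynomial (Fin 2) ℂ) (X 1 ^ n) k
    have hudvd : u = (X 0 ^ n - X 1 ^ n) * (C c * X 0 ^ (d 1) * X 1 ^ (d 1) * w) := by
      rw [hu, monomial_eq', monomial_eq' (sw d), sw_apply0, sw_apply1, hd0]
      rw [pow_add, pow_add, pow_mul, pow_mul]
      linear_combination (C c * X 0 ^ (d 1) * X 1 ^ (d 1)) * hw
    -- properties of h' = h - u
    set h' : MvPolynomial (Fin 2) ℂ := h - u with hh'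
    have hr1 : ζ ^ (d 0) * ζ⁻¹ ^ (d 1) = 1 := hscal
    have hr2 : ζ ^ (sw d 0) * ζ⁻¹ ^ (sw d 1) = 1 := by
      rw [sw_apply0, sw_apply1]
      have hinv : (ζ ^ d 0 * ζ⁻¹ ^ d 1)⁻¹ = 1 := by rw [hscal, inv_one]
      simp only [mul_inv, ← inv_pow, inv_inv] at hinv
      rw [mul_comm]
      exact hinv
    have hru : rAct ζ u = u := by
      rw [hu, map_sub, rAct_monomial, rAct_monomial, hr1, hr2, one_smul, one_smul]
    have hsu : sAct u = -u := by
      rw [hu, map_sub, sAct_monomial, sAct_monomial, sw_sw, neg_sub]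
    have hrh' : rAct ζ h' = h' := by rw [hh', map_sub, h1, hru]
    have hsh' : sAct h' = -h' := by rw [hh', map_sub, h2, hsu]; ring
    -- support decreases
    have hcoeff_d : coeff d h' = 0 := by
      rw [hh', hu, coeff_sub, coeff_sub, coeff_monomial, coeff_monomial,
        if_pos rfl, if_neg hswd_ne, ← hc]
      ring
    have hcoeff_sd : coeff (sw d) h' = 0 := by
      have : d ≠ sw d := fun hh => hswd_ne hh.symm
      rw [hh', hu, coeff_sub, coeff_sub, coeff_monomial, coeff_monomial,
        if_neg this, if_pos rfl, hs d, ← hc]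
      ring
    have hsubset : h'.support ⊆ h.support.erase d := by
      intro e he
      rw [Finset.mem_erase]
      have he' : coeff e h' ≠ 0 := MvPolynomial.mem_support_iff.1 he
      constructor
      · intro hh; exact he' (hh ▸ hcoeff_d)
      · by_cases hed : e = sw d
        · exact absurd (hed ▸ hcoeff_sd) he'
        · rw [MvPolynomial.mem_support_iff]
          intro hch
          apply he'
          rw [hh', hu, coeff_sub, coeff_sub, coeff_monomial, coeff_monomial]
          have h1' : d ≠ e := fun hh => he' (hh ▸ hcoeff_d)
          have h2' : sw d ≠ e := fun hh => hed hh.symm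
          rw [if_neg h1', if_neg h2', hch]
          ring
    have hcard' : h'.support.card ≤ N := by
      have h1' := Finset.card_le_card hsubset
      have h2' := Finset.card_erase_of_mem hd
      omega
    obtain ⟨q, hq⟩ := ih h' hcard' hrh' hsh'
    refine ⟨q + C c * X 0 ^ (d 1) * X 1 ^ (d 1) * w, ?_⟩
    have : h = h' + u := by rw [hh']; ring
    rw [this, hq, hudvd]
    ring

/-- Let `n ≥ 3` be odd, `ζ` a primitive `n`-th root of unity, `C = (n-1)/2`, and let `W = D_n`
act on `ℂ[X,Y]` by `r·X = ζX`, `r·Y = ζ⁻¹Y`, `s·X = Y`, `s·Y = X`.  For `1 ≤ i ≤ C`, if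
`f, g ∈ ℂ[X,Y]` satisfy `r·f = ζ⁻ⁱ·f`, `r·g = ζⁱ·g` and `s·f = -g`, then `(f, g)` lies in
the `ℂ[X,Y]`-submodule of `ℂ[X,Y]²` generated by `(Yⁱ, -Xⁱ)` and `(X^{n-i}, -Y^{n-i})`. -/
theorem stmt_18 (n : ℕ) (hn : 3 ≤ n) (hodd : Odd n) (ζ : ℂ) (hζ : IsPrimitiveRoot ζ n)
    (i : ℕ) (hi : 1 ≤ i) (hiC : i ≤ (n - 1) / 2)
    (f g : MvPolynomial (Fin 2) ℂ)
    (hrf : rAct ζ f = (ζ ^ (-(i : ℤ))) • f) (hrg : rAct ζ g = (ζ ^ (i : ℤ)) • g)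
    (hsf : sAct f = -g) :
    (f, g) ∈ Submodule.span (MvPolynomial (Fin 2) ℂ)
      {((X 1 : MvPolynomial (Fin 2) ℂ) ^ i, -(X 0 : MvPolynomial (Fin 2) ℂ) ^ i),
       ((X 0 : MvPolynomial (Fin 2) ℂ) ^ (n - i), -(X 1 : MvPolynomial (Fin 2) ℂ) ^ (n - i))} := by
  have hn0 : 0 < n := by omega
  set j := n - i with hjdef
  have hij : i + j = n := by omega
  have hζ0 : ζ ≠ 0 := hζ.ne_zero hn0.ne'
  have hzi : ζ ^ i ≠ 0 := pow_ne_zero _ hζ0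
  have hrf' : rAct ζ f = (ζ ^ i)⁻¹ • f := by
    rw [hrf, zpow_neg, zpow_natCast]
  have hrg' : rAct ζ g = (ζ ^ i) • g := by rw [hrg, zpow_natCast]
  have hsg : sAct g = -f := by
    have h4 : f = -(sAct g) := by rw [← sAct_sAct f, hsf, map_neg]
    rw [h4, neg_neg]
  have hD0 : (X 0 : MvPolynomial (Fin 2) ℂ) ^ n - X 1 ^ n ≠ 0 := by
    intro hh
    have h5 := congrArg (eval ![(1 : ℂ), 0]) hh
    simp [zero_pow hn0.ne'] at h5
  have hζn : ζ ^ n = 1 := hζ.pow_eq_one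
  have hzsum : ζ ^ j * ζ ^ i = 1 := by
    rw [← pow_add, show j + i = n from by omega, hζn]
  have hr₁ : rAct ζ (X 0 ^ i * f + X 1 ^ i * g) = X 0 ^ i * f + X 1 ^ i * g := by
    rw [map_add, map_mul, map_mul, map_pow, map_pow, rAct_X0, rAct_X1, hrf', hrg']
    rw [smul_pow, smul_pow, inv_pow, smul_mul_smul_comm, smul_mul_smul_comm,
      mul_inv_cancel₀ hzi, inv_mul_cancel₀ hzi, one_smul, one_smul]
  have hs₁ : sAct (X 0 ^ i * f + X 1 ^ i * g) = -(X 0 ^ i * f + X 1 ^ i * g) := by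
    rw [map_add, map_mul, map_mul, map_pow, map_pow, sAct_X0, sAct_X1, hsf, hsg]
    ring
  have hr₂ : rAct ζ (X 1 ^ j * f + X 0 ^ j * g) = X 1 ^ j * f + X 0 ^ j * g := by
    rw [map_add, map_mul, map_mul, map_pow, map_pow, rAct_X0, rAct_X1, hrf', hrg']
    rw [smul_pow, smul_pow, inv_pow, smul_mul_smul_comm, smul_mul_smul_comm,
      ← mul_inv, hzsum, inv_one, one_smul, one_smul]
  have hs₂ : sAct (X 1 ^ j * f + X 0 ^ j * g) = -(X 1 ^ j * f + X 0 ^ j * g) := by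
    rw [map_add, map_mul, map_mul, map_pow, map_pow, sAct_X0, sAct_X1, hsf, hsg]
    ring
  obtain ⟨q₁, hq₁⟩ := key n hn0 ζ hζ _ _ le_rfl hr₁ hs₁
  obtain ⟨q₂, hq₂⟩ := key n hn0 ζ hζ _ _ le_rfl hr₂ hs₂
  have e0 : (X 0 : MvPolynomial (Fin 2) ℂ) ^ n = X 0 ^ i * X 0 ^ j := by
    rw [← pow_add, hij]
  have e1 : (X 1 : MvPolynomial (Fin 2) ℂ) ^ n = X 1 ^ i * X 1 ^ j := by
    rw [← pow_add, hij]
  rw [e0, e1] at hq₁ hq₂ hD0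
  have hf : f = q₁ * X 0 ^ j + (-q₂) * X 1 ^ i := by
    apply mul_left_cancel₀ hD0
    linear_combination X 0 ^ j * hq₁ - X 1 ^ i * hq₂
  have hg : g = q₁ * (-(X 1 ^ j)) + (-q₂) * (-(X 0 ^ i)) := by
    apply mul_left_cancel₀ hD0
    linear_combination X 0 ^ i * hq₂ - X 1 ^ j * hq₁
  have hmem : ((f, g) : MvPolynomial (Fin 2) ℂ × MvPolynomial (Fin 2) ℂ) =
      q₁ • ((X 0 : MvPolynomial (Fin 2) ℂ) ^ j, -(X 1 : MvPolynomial (Fin 2) ℂ) ^ j) +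
      (-q₂) • ((X 1 : MvPolynomial (Fin 2) ℂ) ^ i, -(X 0 : MvPolynomial (Fin 2) ℂ) ^ i) := by
    apply Prod.ext <;> simp [smul_eq_mul] <;> [(rw [hf]; ring); (rw [hg]; ring)]
  rw [hmem]
  refine Submodule.add_mem _ (Submodule.smul_mem _ _ (Submodule.subset_span ?_))
    (Submodule.smul_mem _ _ (Submodule.subset_span ?_))
  · right; rfl
  · left; rfl


end
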